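/- For all natural numbers k ≥ 1 and ℓ ≥ 1, the number of exponent vectors e ∈ ℕ^ℓ with eᵢ ≥ 1 for all i ∈ [ℓ] and ∏_{i=1}^{ℓ} (eᵢ + 1) ≤ k is strictly less than k². -/

import Mathlib

open Finset

private def Tset (ℓ k : ℕ) : Finset (Fin ℓ → ℕ) :=
  (Fintype.piFinset fun _ => Finset.Icc 1 k).filter fun e => ∏ i, (e i + 1) ≤ k

private lemma mem_Tset {ℓ k : ℕ} {e : Fin ℓ → ℕ} :
    e ∈ Tset ℓ k ↔ (∀ i, 1 ≤ e i) ∧ ∏ i, (e i + 1) ≤ k := by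
  simp only [Tset, mem_filter, Fintype.mem_piFinset, Finset.mem_Icc]
  constructor
  · rintro ⟨h1, h2⟩; exact ⟨fun i => (h1 i).1, h2⟩
  · rintro ⟨h1, h2⟩
    refine ⟨fun i => ⟨h1 i, ?_⟩, h2⟩
    have h3 : e i + 1 ≤ ∏ j, (e j + 1) :=
      Finset.single_le_prod' (fun j _ => Nat.succ_le_succ (Nat.zero_le _)) (mem_univ i)
    omega

private lemma card_Tset_succ (ℓ k : ℕ) :
    (Tset (ℓ + 1) k).card = ∑ d ∈ Finset.Icc 2 k, (Tset ℓ (k / d)).card := by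
  rw [← Finset.card_sigma]
  apply Finset.card_nbij' (fun e => ⟨e (Fin.last ℓ) + 1, Fin.init e⟩)
    (fun p => Fin.snoc p.2 (p.1 - 1))
  · intro e he
    rw [Finset.mem_coe, mem_Tset] at he
    obtain ⟨h1, h2⟩ := he
    rw [Fin.prod_univ_castSucc] at h2
    have hd2 : 2 ≤ e (Fin.last ℓ) + 1 := by have := h1 (Fin.last ℓ); omega
    have hone : 0 < ∏ i : Fin ℓ, (e i.castSucc + 1) :=
      Finset.prod_pos fun i _ => Nat.succ_pos _
    rw [Finset.mem_coe, Finset.mem_sigma, Finset.mem_Icc, mem_Tset]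
    refine ⟨⟨hd2, ?_⟩, fun i => h1 _, ?_⟩
    · calc e (Fin.last ℓ) + 1 ≤ (∏ i : Fin ℓ, (e i.castSucc + 1)) * (e (Fin.last ℓ) + 1) :=
            Nat.le_mul_of_pos_left _ hone
        _ ≤ k := h2
    · show ∏ i : Fin ℓ, (Fin.init e i + 1) ≤ k / (e (Fin.last ℓ) + 1)
      rw [Nat.le_div_iff_mul_le (Nat.succ_pos _)]
      exact h2
  · rintro ⟨d, f⟩ hp
    simp only [Finset.mem_coe, Finset.mem_sigma, Finset.mem_Icc, mem_Tset] at hp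
    obtain ⟨⟨hd2, hdk⟩, h1, h2⟩ := hp
    rw [Finset.mem_coe, mem_Tset]
    dsimp only
    constructor
    · intro i
      refine Fin.lastCases ?_ ?_ i
      · simp only [Fin.snoc_last]; omega
      · intro j; simp only [Fin.snoc_castSucc]; exact h1 j
    · rw [Fin.prod_univ_castSucc]
      simp only [Fin.snoc_last, Fin.snoc_castSucc]
      have hd1 : d - 1 + 1 = d := by omega
      rw [hd1]
      rw [Nat.le_div_iff_mul_le (by omega : 0 < d)] at h2
      exact h2
  · intro e he
    dsimp only
    simp only [Nat.add_sub_cancel]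
    exact Fin.snoc_init_self e
  · rintro ⟨d, f⟩ hp
    simp only [Finset.mem_coe, Finset.mem_sigma, Finset.mem_Icc] at hp
    obtain ⟨⟨hd2, _⟩, _⟩ := hp
    dsimp only
    refine Sigma.ext ?_ ?_
    · simp only [Fin.snoc_last]; omega
    · simp only [Fin.snoc_last, Fin.init_snoc]
      exact HEq.rfl


private lemma telescope : ∀ k : ℕ, 1 ≤ k →
    ∑ d ∈ Finset.Icc 2 k, (1 : ℝ) / (((d : ℝ) - 1) * d) = 1 - 1 / k := by
  intro k
  induction k with
  | zero => omega
  | succ n ih =>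
    intro _
    rcases Nat.eq_zero_or_pos n with h | h
    · subst h; norm_num
    · rw [← Finset.insert_Icc_right_eq_Icc_add_one (by omega), Finset.sum_insert (by simp), ih h]
      have hn0 : (n : ℝ) ≠ 0 := Nat.cast_ne_zero.mpr (by omega)
      have hn1 : (n : ℝ) + 1 ≠ 0 := by positivity
      push_cast
      field_simp
      ring_nf
      rw [mul_inv_cancel₀ hn0]
      ring

private lemma sum_div_sq_le (k : ℕ) (hk : 1 ≤ k) :
    ∑ d ∈ Finset.Icc 2 k, (k / d) ^ 2 ≤ k ^ 2 := by
  rw [← Nat.cast_le (α := ℝ)]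
  push_cast
  have key : ∀ d ∈ Finset.Icc 2 k, ((k / d : ℕ) : ℝ) ^ 2 ≤
      (k : ℝ) ^ 2 * ((1 : ℝ) / (((d : ℝ) - 1) * d)) := by
    intro d hd
    rw [Finset.mem_Icc] at hd
    have hd2 : (2 : ℝ) ≤ (d : ℝ) := by exact_mod_cast hd.1
    have hpos : (0 : ℝ) < ((d : ℝ) - 1) * d := by nlinarith
    rw [mul_one_div, le_div_iff₀ hpos]
    have h1 : (k / d) * d ≤ k := Nat.div_mul_le_self k d
    have c1 : ((k / d : ℕ) : ℝ) * d ≤ (k : ℝ) := by exact_mod_cast h1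
    have hnn : (0 : ℝ) ≤ ((k / d : ℕ) : ℝ) := Nat.cast_nonneg _
    have c2 : ((k / d : ℕ) : ℝ) * ((d : ℝ) - 1) ≤ (k : ℝ) := by nlinarith
    have hk0 : (0 : ℝ) ≤ (k : ℝ) := Nat.cast_nonneg _
    nlinarith [mul_le_mul c2 c1 (by positivity) hk0]
  calc ∑ d ∈ Finset.Icc 2 k, ((k / d : ℕ) : ℝ) ^ 2
      ≤ ∑ d ∈ Finset.Icc 2 k, (k : ℝ) ^ 2 * ((1 : ℝ) / (((d : ℝ) - 1) * d)) :=
        Finset.sum_le_sum key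
    _ = (k : ℝ) ^ 2 * (1 - 1 / k) := by rw [← Finset.mul_sum, telescope k hk]
    _ ≤ (k : ℝ) ^ 2 := by
        have h1 : (1 : ℝ) / k ≥ 0 := by positivity
        nlinarith [sq_nonneg (k : ℝ)]

private lemma card_Tset_one (k : ℕ) : (Tset 1 k).card = k - 1 := by
  have : (Tset 1 k).card = (Finset.Icc 2 k).card := by
    apply Finset.card_nbij' (fun e => e 0 + 1) (fun d _ => d - 1)
    · intro e he
      rw [Finset.mem_coe, mem_Tset] at he
      obtain ⟨h1, h2⟩ := he
      rw [Fin.prod_univ_one] at h2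
      rw [Finset.mem_coe, Finset.mem_Icc]
      exact ⟨by have := h1 0; dsimp only; omega, h2⟩
    · intro d hd
      rw [Finset.mem_coe, Finset.mem_Icc] at hd
      rw [Finset.mem_coe, mem_Tset, Fin.prod_univ_one]
      constructor
      · intro i; fin_cases i <;> dsimp only <;> omega
      · dsimp only; omega
    · intro e he
      funext i
      fin_cases i
      simp
    · intro d hd
      rw [Finset.mem_coe, Finset.mem_Icc] at hd
      show d - 1 + 1 = d
      omega
  rw [this, Nat.card_Icc]
  omega

private lemma four_mul_card_le : ∀ ℓ, 1 ≤ ℓ → ∀ k, 4 * (Tset ℓ k).card ≤ k ^ 2 := by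
  intro ℓ hℓ
  induction ℓ, hℓ using Nat.le_induction with
  | base =>
    intro k
    rw [card_Tset_one]
    rcases k with _ | _ | m
    · simp
    · simp
    · have : (m + 1 + 1) ^ 2 = m ^ 2 + 4 * m + 4 := by ring
      omega
  | succ ℓ hℓ ih =>
    intro k
    rcases Nat.eq_zero_or_pos k with h | hk
    · subst h
      have : Tset (ℓ + 1) 0 = ∅ := by
        rw [Finset.eq_empty_iff_forall_notMem]
        intro e he
        rw [mem_Tset] at he
        have := he.2
        have h1 : 0 < ∏ i, (e i + 1) := Finset.prod_pos fun i _ => Nat.succ_pos _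
        omega
      simp [this]
    rw [card_Tset_succ, Finset.mul_sum]
    calc ∑ d ∈ Finset.Icc 2 k, 4 * (Tset ℓ (k / d)).card
        ≤ ∑ d ∈ Finset.Icc 2 k, (k / d) ^ 2 := Finset.sum_le_sum fun d _ => ih (k / d)
      _ ≤ k ^ 2 := sum_div_sq_le k hk


/-- **Counting full-support low-cone monomials.** For `k, ℓ ≥ 1`, the number of
exponent vectors `e ∈ ℕ^ℓ` with all coordinates positive and cone-size
`∏ (eᵢ + 1) ≤ k` is strictly less than `k²`. -/
theorem count_full_support_low_cone_monomials
    (k ℓ : ℕ) (hk : 1 ≤ k) (hℓ : 1 ≤ ℓ) :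
    {e : Fin ℓ → ℕ | (∀ i, 1 ≤ e i) ∧ ∏ i, (e i + 1) ≤ k}.Finite ∧
    {e : Fin ℓ → ℕ | (∀ i, 1 ≤ e i) ∧ ∏ i, (e i + 1) ≤ k}.ncard < k ^ 2 := by
  have hset : {e : Fin ℓ → ℕ | (∀ i, 1 ≤ e i) ∧ ∏ i, (e i + 1) ≤ k} = ↑(Tset ℓ k) := by
    ext e
    rw [Set.mem_setOf_eq, Finset.mem_coe, mem_Tset]
  rw [hset]
  refine ⟨(Tset ℓ k).finite_toSet, ?_⟩
  rw [Set.ncard_coe_finset]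
  have h4 := four_mul_card_le ℓ hℓ k
  have hk2 : 1 ≤ k ^ 2 := Nat.one_le_pow _ _ hk
  omega
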